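/- arXiv:1208.6451 — 2 statements merged into one kernel-verified Lean document; each statement's English description precedes it below -/
import Mathlib

section
/- For every x ∈ {0,1}^n and every i with 2 ≤ i ≤ n, if x_i ≠ Φ_n(x)_i then Φ_n(x)_i = Φ_n^2(x)_i. -/
/-- The prefix `(x₁,…,x_m)` (1-indexed) of `x ∈ {0,1}ⁿ` is alternating:
consecutive entries differ. -/
def AltPrefix (n : ℕ) (x : Fin n → Bool) (m : ℕ) : Prop :=
  ∀ j : ℕ, j + 1 < m → ∀ hn : j + 1 < n,
    x ⟨j, Nat.lt_of_succ_lt hn⟩ ≠ x ⟨j + 1, hn⟩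

instance (n : ℕ) (x : Fin n → Bool) : DecidablePred (AltPrefix n x) := fun m =>
  decidable_of_iff
    (∀ j ∈ Finset.range n, j + 1 < m → ∀ hn : j + 1 < n,
      x ⟨j, Nat.lt_of_succ_lt hn⟩ ≠ x ⟨j + 1, hn⟩)
    (by
      constructor
      · intro h j hj hn
        exact h j (Finset.mem_range.mpr (Nat.lt_of_succ_lt hn)) hj hn
      · intro h j _ hj hn
        exact h j hj hn)

/-- The largest `m ≤ n` such that the prefix `(x₁,…,x_m)` is alternating. -/
def mIdx (n : ℕ) (x : Fin n → Bool) : ℕ :=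
  Nat.findGreatest (AltPrefix n x) n

/-- The map `Φₙ : {0,1}ⁿ → {0,1}ⁿ`: with `m` the largest index such that
`(x₁,…,x_m)` is alternating, `yᵢ = 1 - x_m` for `i ≤ m` and `yᵢ = xᵢ` for `i > m`. -/
def Phi (n : ℕ) (x : Fin n → Bool) : Fin n → Bool :=
  fun i =>
    if _h : (i : ℕ) < mIdx n x then
      ! x ⟨mIdx n x - 1, by
        have h2 : mIdx n x ≤ n := Nat.findGreatest_le n
        omega⟩
    else x i

/-- The alternating vector `(…,1,0,1,0)`: `x_j = 1` iff `j ≢ n (mod 2)` (1-indexed). -/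
def altEnd0 (n : ℕ) : Fin n → Bool := fun i => decide (((i : ℕ) + 1) % 2 ≠ n % 2)

/-- The alternating vector `(…,0,1,0,1)`: `x_j = 1` iff `j ≡ n (mod 2)` (1-indexed). -/
def altEnd1 (n : ℕ) : Fin n → Bool := fun i => decide (((i : ℕ) + 1) % 2 = n % 2)

/-- The bit `c_j` (0-indexed `j`): XOR of consecutive bits `x_j, x_{j+1}`,
and for the last position the bit itself. -/
def cbit (n : ℕ) (x : Fin n → Bool) (j : Fin n) : Bool :=
  if h : (j : ℕ) + 1 < n then xor (x j) (x ⟨(j : ℕ) + 1, h⟩) else x j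

/-- The map `rₙ(x) = Σ_{j=1}^n c_j 2^{j-1}`. -/
def rmap (n : ℕ) (x : Fin n → Bool) : ℕ :=
  ∑ j : Fin n, (if cbit n x j then 1 else 0) * 2 ^ (j : ℕ)

/-- The recursively defined weights `w_{n,i,j}` (all indices 1-based; values for
indices outside `1 ≤ i, j ≤ n` are irrelevant junk). -/
def wgt : ℕ → ℕ → ℕ → ℤ
  | 0, _, _ => 0
  | 1, _, _ => -1
  | (n+2), i, j =>
    if i = n + 2 then
      (if j = n + 2 then (n : ℤ)
       else if j % 2 = (n + 2) % 2 then -1 else 1)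
    else if i = n + 1 then
      (if j = n + 2 then -1
       else if j = n + 1 then wgt (n+1) (n+1) j + 1
       else wgt (n+1) (n+1) j)
    else
      (if j = n + 2 then -1
       else if j = n + 1 then wgt (n+1) i j
       else wgt (n+1) i j + wgt n i j)

/-- The recursively defined thresholds `θ_{n,i}`. -/
def thr : ℕ → ℕ → ℤ
  | 0, _ => 0
  | 1, _ => 0
  | (n+2), i =>
    if i = n + 2 then (((n + 2) / 2 : ℕ) : ℤ)
    else if i = n + 1 then thr (n+1) (n+1)
    else thr (n+1) i + thr n i - 1

/-- For every `x ∈ {0,1}ⁿ` and every `i` with `2 ≤ i ≤ n` (1-indexed):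
if `xᵢ ≠ Φₙ(x)ᵢ` then `Φₙ(x)ᵢ = Φₙ²(x)ᵢ`. -/
theorem Phi_later_bits (n : ℕ) (x : Fin n → Bool) (i : Fin n) (hi : 1 ≤ (i : ℕ))
    (h : x i ≠ Phi n x i) :
    Phi n x i = Phi n (Phi n x) i := by
  -- From h we deduce i < mIdx n x
  have him : (i : ℕ) < mIdx n x := by
    by_contra hc
    apply h
    simp [Phi, hc]
  have hm2 : 2 ≤ mIdx n x := by omega
  have hn2 : 1 < n := lt_of_le_of_lt hi i.isLt
  -- Phi n x is constant !x_{m-1} on positions < m; in particular 0 and 1 agree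
  have h01 : Phi n x ⟨0, by omega⟩ = Phi n x ⟨1, hn2⟩ := by
    simp only [Phi]
    rw [dif_pos (by simpa using by omega : (0 : ℕ) < mIdx n x),
        dif_pos (by simpa using by omega : (1 : ℕ) < mIdx n x)]
  -- hence mIdx n (Phi n x) ≤ 1
  have hM : mIdx n (Phi n x) ≤ 1 := by
    by_contra hc
    push_neg at hc
    have hspec : AltPrefix n (Phi n x) (mIdx n (Phi n x)) :=
      Nat.findGreatest_spec (Nat.zero_le n) (fun j hj _ => absurd hj (by omega))
    exact hspec 0 (by omega) hn2 h01
  -- therefore the second application doesn't touch position i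
  have : ¬ ((i : ℕ) < mIdx n (Phi n x)) := by omega
  simp [Phi, this]
end

section
/- For each fixed i with 1 ≤ i ≤ n, along the trajectory Φ_n^t(0,…,0), t = 0,…,2^n−1, the i-th bit is constant on each consecutive block of indices t of length 2^{i−1} starting at multiples of 2^{i−1}; i.e., for all t, t' with ⌊t/2^{i−1}⌋ = ⌊t'/2^{i−1}⌋, Φ_n^t(0,…,0)_i = Φ_n^{t'}(0,…,0)_i. -/
/-- Parity of the binary popcount. -/
def par : ℕ → Bool
  | 0 => false
  | (n+1) => xor (decide ((n+1) % 2 = 1)) (par ((n+1)/2))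
decreasing_by exact Nat.div_lt_self (Nat.succ_pos n) one_lt_two

lemma par_eq (v : ℕ) : par v = xor (decide (v % 2 = 1)) (par (v/2)) := by
  cases v with
  | zero => simp [par]
  | succ n => rw [par]

lemma par_even {v : ℕ} (h : v % 2 = 0) : par v = par (v/2) := by
  rw [par_eq v]; simp [h]

lemma par_odd {v : ℕ} (h : v % 2 = 1) : par v = !(par (v/2)) := by
  rw [par_eq v]; simp [h, Bool.xor_comm]

lemma par_pow_mul (a u : ℕ) : par (2^a * u) = par u := by
  induction a with
  | zero => simp
  | succ a ih =>
    rw [pow_succ, mul_comm (2^a) 2, mul_assoc,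
      par_even (by omega), Nat.mul_div_cancel_left _ (by norm_num)]
    exact ih

section Main

variable {t k u : ℕ} (hu : u % 2 = 1) (htu : t + 1 = 2^k * u)

include hu htu

lemma div_formula (j : ℕ) (hj : j ≤ k) : t / 2^j = 2^(k-j) * u - 1 := by
  have h2k : (2:ℕ)^k = 2^j * 2^(k-j) := by
    rw [← pow_add]; congr 1; omega
  obtain ⟨q, hq⟩ : ∃ q, 2^(k-j) * u = q + 1 :=
    ⟨2^(k-j) * u - 1, by
      have : 0 < 2^(k-j) * u := Nat.mul_pos (Nat.pow_pos (by norm_num : 0 < 2)) (by omega)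
      omega⟩
  have key : t + 1 = 2^j * q + 2^j := by
    rw [htu, h2k, mul_assoc, hq, Nat.mul_add, Nat.mul_one]
  have hpj : 0 < (2:ℕ)^j := Nat.pow_pos (by norm_num : 0 < 2)
  have ht_eq : t = 2^j * q + (2^j - 1) := by omega
  rw [ht_eq, Nat.mul_add_div hpj, Nat.div_eq_of_lt (by omega), hq]
  omega

lemma par_step_lt (j : ℕ) (hj : j < k) :
    par (t / 2^j) = !(par (t / 2^(j+1))) := by
  have h1 := div_formula hu htu j hj.le
  have h2 : 2^(k-j) * u = 2 * (2^(k-j-1) * u) := by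
    rw [← mul_assoc, ← pow_succ']
    congr 2
    omega
  have hpos : 0 < 2^(k-j-1) * u :=
    Nat.mul_pos (Nat.pow_pos (by norm_num : 0 < 2)) (by omega)
  have hodd : (t / 2^j) % 2 = 1 := by
    rw [h1, h2]; omega
  rw [par_odd hodd, Nat.div_div_eq_div_mul, ← pow_succ]

lemma par_step_eq : par (t / 2^k) = par (t / 2^(k+1)) := by
  have h1 := div_formula hu htu k le_rfl
  simp only [Nat.sub_self, pow_zero, one_mul] at h1
  have heven : (t / 2^k) % 2 = 0 := by omega
  rw [par_even heven, Nat.div_div_eq_div_mul, ← pow_succ]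

lemma mIdx_eq {n : ℕ} (hkn : k + 1 ≤ n) :
    mIdx n (fun i : Fin n => par (t / 2^(i:ℕ))) = k + 1 := by
  rw [mIdx, Nat.findGreatest_eq_iff]
  refine ⟨hkn, fun _ => ?_, fun m hm hmn hP => ?_⟩
  · intro j hj hn'
    have := par_step_lt hu htu j (by omega)
    simp only [ne_eq]
    rw [this]
    simp
  · have hkn' : k + 1 < n := by omega
    have := hP k (by omega) hkn'
    simp only [ne_eq] at this
    exact this (par_step_eq hu htu)

lemma phi_gray {n : ℕ} (hlt : t + 1 < 2^n) :
    Phi n (fun i : Fin n => par (t / 2^(i:ℕ)))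
      = fun i : Fin n => par ((t+1) / 2^(i:ℕ)) := by
  have hkn : k + 1 ≤ n := by
    have h1 : (2:ℕ)^k ≤ 2^k * u := Nat.le_mul_of_pos_right _ (by omega)
    have h2 : (2:ℕ)^k < 2^n := by omega
    exact (Nat.pow_lt_pow_iff_right (by norm_num)).mp h2
  funext i
  rw [Phi]
  simp only [mIdx_eq hu htu hkn, Nat.add_sub_cancel]
  split
  · -- i ≤ k : constant value
    next h =>
    have hik : (i:ℕ) ≤ k := by omega
    have hdvd : t + 1 = 2^(i:ℕ) * (2^(k-(i:ℕ)) * u) := by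
      rw [htu, ← mul_assoc, ← pow_add]; congr 2; omega
    have hdiv : (t+1) / 2^(i:ℕ) = 2^(k-(i:ℕ)) * u := by
      rw [hdvd, Nat.mul_div_cancel_left _ (Nat.pow_pos (by norm_num : 0 < 2))]
    have htk : t / 2^k = u - 1 := by
      have := div_formula hu htu k le_rfl
      simpa using this
    rw [hdiv, par_pow_mul, htk, par_odd hu,
      par_even (v := u - 1) (by omega)]
    have huu : (u-1)/2 = u/2 := by omega
    rw [huu]
  · -- i > k : unchanged
    next h =>
    have hik : k + 1 ≤ (i:ℕ) := by omega
    have hndvd : ¬ 2^(i:ℕ) ∣ t + 1 := by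
      intro hd
      have h2 : (2:ℕ)^(k+1) ∣ t + 1 := dvd_trans (pow_dvd_pow 2 hik) hd
      rw [htu, pow_succ] at h2
      have h3 : (2:ℕ)^k * 2 ∣ 2^k * u := h2
      have h4 : (2:ℕ) ∣ u :=
        (Nat.mul_dvd_mul_iff_left (Nat.pow_pos (n := k) (by norm_num : 0 < 2))).mp h3
      omega
    rw [Nat.succ_div, if_neg hndvd, Nat.add_zero]

end Main

lemma phi_iterate {n : ℕ} (t : ℕ) (ht : t < 2^n) :
    (Phi n)^[t] (fun _ => false) = fun i : Fin n => par (t / 2^(i:ℕ)) := by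
  induction t with
  | zero => funext i; simp [par]
  | succ t ih =>
    obtain ⟨k, u, hu2, htu⟩ := Nat.exists_eq_pow_mul_and_not_dvd
      (n := t+1) (by omega) 2 (by norm_num)
    have hu : u % 2 = 1 := by omega
    rw [Function.iterate_succ_apply', ih (by omega), phi_gray hu htu ht]

/-- Along the trajectory of `(0,…,0)`, the `i`-th bit (1-indexed `i`, here `i : Fin n`
so the block length is `2^(i : ℕ)`) is constant on each block of `2^{i-1}` consecutive
times starting at multiples of `2^{i-1}`. -/
theorem Phi_bit_blocks (n : ℕ) (hn : 0 < n) (i : Fin n) (t t' : ℕ)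
    (ht : t < 2 ^ n) (ht' : t' < 2 ^ n)
    (hblock : t / 2 ^ (i : ℕ) = t' / 2 ^ (i : ℕ)) :
    (Phi n)^[t] (fun _ => false) i = (Phi n)^[t'] (fun _ => false) i := by
  have h1 := phi_iterate (n := n) t ht
  have h2 := phi_iterate (n := n) t' ht'
  rw [h1, h2]
  simp only [hblock]
end
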